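/- Davis–Kahan type bound for eigenvector perturbation: let C and C̃ = C + E be real symmetric n×n matrices with eigenvalues λ_1 ≥ … ≥ λ_n of C, and let u_k, ũ_k be unit eigenvectors of C and C̃ for the k-th eigenvalue. If min(λ_{k−1} − λ_k, λ_k − λ_{k+1}) > 0, then sin∠(u_k, ũ_k) ≤ 2‖E‖_op / min(λ_{k−1} − λ_k, λ_k − λ_{k+1}), where sin∠(u, v) = √(1 − ⟨u,v⟩²). -/

import Mathlib

open Matrix Finset

namespace DavisKahanAux

variable {n : ℕ}

lemma inner_eq_sum (x y : EuclideanSpace ℝ (Fin n)) :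
    (inner ℝ x y : ℝ) = ∑ i, x i * y i := by
  simp [PiLp.inner_apply, RCLike.inner_apply, conj_trivial, mul_comm]

lemma norm_sq_eq_sum (x : EuclideanSpace ℝ (Fin n)) : ‖x‖ ^ 2 = ∑ i, x i ^ 2 := by
  rw [← real_inner_self_eq_norm_sq, inner_eq_sum]
  exact Finset.sum_congr rfl fun i _ => (sq (x i)).symm

lemma eigen_apply (b : OrthonormalBasis (Fin n) ℝ (EuclideanSpace ℝ (Fin n)))
    (T : EuclideanSpace ℝ (Fin n) →L[ℝ] EuclideanSpace ℝ (Fin n)) (lam : Fin n → ℝ)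
    (hT : ∀ i, T (b i) = lam i • b i) (x : EuclideanSpace ℝ (Fin n)) :
    T x = ∑ j, (lam j * b.repr x j) • b j := by
  conv_lhs => rw [← b.sum_repr x]
  rw [map_sum]
  refine Finset.sum_congr rfl fun j _ => ?_
  rw [ContinuousLinearMap.map_smul, hT, smul_smul, mul_comm]

lemma repr_apply_of_eigen (b : OrthonormalBasis (Fin n) ℝ (EuclideanSpace ℝ (Fin n)))
    (T : EuclideanSpace ℝ (Fin n) →L[ℝ] EuclideanSpace ℝ (Fin n)) (lam : Fin n → ℝ)
    (hT : ∀ i, T (b i) = lam i • b i) (x : EuclideanSpace ℝ (Fin n)) (i : Fin n) :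
    b.repr (T x) i = lam i * b.repr x i := by
  rw [eigen_apply b T lam hT x, b.repr_apply_apply,
    b.orthonormal.inner_right_fintype (fun j => lam j * b.repr x j) i]

lemma inner_eq_sum_repr (b : OrthonormalBasis (Fin n) ℝ (EuclideanSpace ℝ (Fin n)))
    (x y : EuclideanSpace ℝ (Fin n)) :
    (inner ℝ x y : ℝ) = ∑ i, b.repr x i * b.repr y i := by
  rw [← b.repr.inner_map_map x y, inner_eq_sum]

lemma norm_sq_eq_sum_repr (b : OrthonormalBasis (Fin n) ℝ (EuclideanSpace ℝ (Fin n)))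
    (x : EuclideanSpace ℝ (Fin n)) : ‖x‖ ^ 2 = ∑ i, b.repr x i ^ 2 := by
  rw [← real_inner_self_eq_norm_sq, inner_eq_sum_repr b]
  exact Finset.sum_congr rfl fun i _ => (sq _).symm

lemma repr_eq_zero_of_mem_span (b : OrthonormalBasis (Fin n) ℝ (EuclideanSpace ℝ (Fin n)))
    (s : Set (Fin n)) (x : EuclideanSpace ℝ (Fin n))
    (hx : x ∈ Submodule.span ℝ (b '' s)) (j : Fin n) (hj : j ∉ s) :
    b.repr x j = 0 := by
  have hker : Submodule.span ℝ (b '' s) ≤ LinearMap.ker ((innerSL ℝ (b j)).toLinearMap) := by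
    rw [Submodule.span_le]
    rintro _ ⟨i, hi, rfl⟩
    have hne : j ≠ i := fun h => hj (h ▸ hi)
    simpa [LinearMap.mem_ker] using b.orthonormal.2 hne
  have := hker hx
  rw [LinearMap.mem_ker] at this
  rw [b.repr_apply_apply]
  simpa using this

lemma inner_T (b : OrthonormalBasis (Fin n) ℝ (EuclideanSpace ℝ (Fin n)))
    (T : EuclideanSpace ℝ (Fin n) →L[ℝ] EuclideanSpace ℝ (Fin n)) (lam : Fin n → ℝ)
    (hT : ∀ i, T (b i) = lam i • b i) (x : EuclideanSpace ℝ (Fin n)) :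
    (inner ℝ x (T x) : ℝ) = ∑ i, lam i * b.repr x i ^ 2 := by
  rw [inner_eq_sum_repr b]
  refine Finset.sum_congr rfl fun i _ => ?_
  rw [repr_apply_of_eigen b T lam hT x i]; ring

lemma rayleigh_le (b : OrthonormalBasis (Fin n) ℝ (EuclideanSpace ℝ (Fin n)))
    (T : EuclideanSpace ℝ (Fin n) →L[ℝ] EuclideanSpace ℝ (Fin n)) (lam : Fin n → ℝ)
    (hT : ∀ i, T (b i) = lam i • b i) (s : Set (Fin n)) (c : ℝ)
    (hc : ∀ i ∈ s, lam i ≤ c) (x : EuclideanSpace ℝ (Fin n))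
    (hx : x ∈ Submodule.span ℝ (b '' s)) :
    (inner ℝ x (T x) : ℝ) ≤ c * ‖x‖ ^ 2 := by
  rw [inner_T b T lam hT, norm_sq_eq_sum_repr b, Finset.mul_sum]
  refine Finset.sum_le_sum fun i _ => ?_
  by_cases hi : i ∈ s
  · exact mul_le_mul_of_nonneg_right (hc i hi) (sq_nonneg _)
  · rw [repr_eq_zero_of_mem_span b s x hx i hi]; simp

lemma rayleigh_ge (b : OrthonormalBasis (Fin n) ℝ (EuclideanSpace ℝ (Fin n)))
    (T : EuclideanSpace ℝ (Fin n) →L[ℝ] EuclideanSpace ℝ (Fin n)) (lam : Fin n → ℝ)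
    (hT : ∀ i, T (b i) = lam i • b i) (s : Set (Fin n)) (c : ℝ)
    (hc : ∀ i ∈ s, c ≤ lam i) (x : EuclideanSpace ℝ (Fin n))
    (hx : x ∈ Submodule.span ℝ (b '' s)) :
    c * ‖x‖ ^ 2 ≤ (inner ℝ x (T x) : ℝ) := by
  rw [inner_T b T lam hT, norm_sq_eq_sum_repr b, Finset.mul_sum]
  refine Finset.sum_le_sum fun i _ => ?_
  by_cases hi : i ∈ s
  · exact mul_le_mul_of_nonneg_right (hc i hi) (sq_nonneg _)
  · rw [repr_eq_zero_of_mem_span b s x hx i hi]; simp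

lemma finrank_span_image (b : OrthonormalBasis (Fin n) ℝ (EuclideanSpace ℝ (Fin n)))
    (s : Finset (Fin n)) :
    Module.finrank ℝ (Submodule.span ℝ (b '' ↑s)) = s.card := by
  classical
  have h1 : b '' ↑s = Set.range (fun i : ↥s => b i) := by
    exact (Set.image_eq_range _ _)
  have hli : LinearIndependent ℝ (fun i : ↥s => b ↑i) :=
    b.orthonormal.linearIndependent.comp _ Subtype.val_injective
  rw [h1, finrank_span_eq_card hli]
  simp

lemma exists_ne_zero_inter (V W : Submodule ℝ (EuclideanSpace ℝ (Fin n)))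
    (h : n < Module.finrank ℝ V + Module.finrank ℝ W) :
    ∃ x : EuclideanSpace ℝ (Fin n), x ≠ 0 ∧ x ∈ V ∧ x ∈ W := by
  have hsum := Submodule.finrank_sup_add_finrank_inf_eq V W
  have htop : Module.finrank ℝ ↥(V ⊔ W) ≤ n := by
    have := Submodule.finrank_le (V ⊔ W)
    simpa [finrank_euclideanSpace] using this
  have hpos : 0 < Module.finrank ℝ ↥(V ⊓ W) := by omega
  obtain ⟨⟨x, hx⟩, hx0⟩ := Module.finrank_pos_iff_exists_ne_zero.mp hpos
  exact ⟨x, by simpa [Submodule.mk_eq_zero] using hx0, (Submodule.mem_inf.mp hx).1,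
    (Submodule.mem_inf.mp hx).2⟩

lemma weyl_one_sided (B D : OrthonormalBasis (Fin n) ℝ (EuclideanSpace ℝ (Fin n)))
    (T S : EuclideanSpace ℝ (Fin n) →L[ℝ] EuclideanSpace ℝ (Fin n)) (lam mu : Fin n → ℝ)
    (hlam : Antitone lam) (hmu : Antitone mu)
    (hTB : ∀ i, T (B i) = lam i • B i) (hSD : ∀ j, S (D j) = mu j • D j)
    (k : Fin n) : lam k ≤ mu k + ‖T - S‖ := by
  classical
  obtain ⟨x, hx0, hxV, hxW⟩ := exists_ne_zero_inter
    (Submodule.span ℝ (B '' ↑(Finset.Iic k))) (Submodule.span ℝ (D '' ↑(Finset.Ici k))) (by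
      rw [finrank_span_image, finrank_span_image, Fin.card_Iic, Fin.card_Ici]
      have := k.isLt; omega)
  have h1 : lam k * ‖x‖ ^ 2 ≤ (inner ℝ x (T x) : ℝ) :=
    rayleigh_ge B T lam hTB _ _ (fun i hi => hlam (by simpa using hi)) x hxV
  have h2 : (inner ℝ x (S x) : ℝ) ≤ mu k * ‖x‖ ^ 2 :=
    rayleigh_le D S mu hSD _ _ (fun j hj => hmu (by simpa using hj)) x hxW
  have h3 : (inner ℝ x (T x) : ℝ) - inner ℝ x (S x) ≤ ‖T - S‖ * ‖x‖ ^ 2 := by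
    have := real_inner_le_norm x ((T - S) x)
    have hb : ‖(T - S) x‖ ≤ ‖T - S‖ * ‖x‖ := (T - S).le_opNorm x
    have hinner : (inner ℝ x ((T - S) x) : ℝ) = inner ℝ x (T x) - inner ℝ x (S x) := by
      simp [inner_sub_right]
    nlinarith [norm_nonneg x]
  have hx2 : (0:ℝ) < ‖x‖ ^ 2 := pow_pos (norm_pos_iff.mpr hx0) 2
  nlinarith

lemma weyl (B D : OrthonormalBasis (Fin n) ℝ (EuclideanSpace ℝ (Fin n)))
    (T S : EuclideanSpace ℝ (Fin n) →L[ℝ] EuclideanSpace ℝ (Fin n)) (lam mu : Fin n → ℝ)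
    (hlam : Antitone lam) (hmu : Antitone mu)
    (hTB : ∀ i, T (B i) = lam i • B i) (hSD : ∀ j, S (D j) = mu j • D j)
    (k : Fin n) : |mu k - lam k| ≤ ‖T - S‖ := by
  rw [abs_sub_le_iff]
  constructor
  · have := weyl_one_sided D B S T mu lam hmu hlam hSD hTB k
    rw [norm_sub_rev] at this; linarith
  · have := weyl_one_sided B D T S lam mu hlam hmu hTB hSD k
    linarith

lemma toCLM_eigen (A : Matrix (Fin n) (Fin n) ℝ) (hA : A.IsHermitian) (i : Fin n) :
    Matrix.toEuclideanCLM (𝕜 := ℝ) A (hA.eigenvectorBasis i) =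
      hA.eigenvalues i • hA.eigenvectorBasis i := by
  have h2 := congrArg (WithLp.equiv 2 (Fin n → ℝ)).symm (hA.mulVec_eigenvectorBasis i)
  have h3 := by simpa using h2
  exact h3

lemma toCLM_mulvec_eigen (A : Matrix (Fin n) (Fin n) ℝ) (c : ℝ) (x : Fin n → ℝ)
    (hx : A *ᵥ x = c • x) :
    Matrix.toEuclideanCLM (𝕜 := ℝ) A ((WithLp.equiv 2 (Fin n → ℝ)).symm x) =
      c • (WithLp.equiv 2 (Fin n → ℝ)).symm x := by
  rw [WithLp.equiv_symm_apply, toEuclideanCLM_toLp, hx]; rfl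

lemma toCLM_add (A A' : Matrix (Fin n) (Fin n) ℝ) :
    Matrix.toEuclideanCLM (𝕜 := ℝ) (A + A') =
      Matrix.toEuclideanCLM (𝕜 := ℝ) A + Matrix.toEuclideanCLM (𝕜 := ℝ) A' :=
  map_add _ A A'

end DavisKahanAux

set_option maxHeartbeats 1000000 in
open DavisKahanAux in
/-- Davis–Kahan `sin Θ` bound (Yu–Wang–Samworth variant): for real symmetric
`C` and `C̃ = C + E` with descending eigenvalue lists `lam` and `mu`, and unit
eigenvectors `u`, `v` for the `k`-th eigenvalue of `C` resp. `C̃`, if `δ > 0`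
lower-bounds `min(λ_{k-1} - λ_k, λ_k - λ_{k+1})` (missing neighbors count as
`±∞`, so the corresponding condition is vacuous), then
`sin∠(u, v) = √(1 - ⟨u,v⟩²) ≤ 2‖E‖_op / δ`. -/
theorem davis_kahan_sin_theta
    {n : ℕ} (C E : Matrix (Fin n) (Fin n) ℝ)
    (hC : C.IsHermitian) (hCE : (C + E).IsHermitian)
    (lam mu : Fin n → ℝ)
    (hlam_anti : Antitone lam) (hmu_anti : Antitone mu)
    (hlam : ∃ σ : Equiv.Perm (Fin n), lam = hC.eigenvalues ∘ σ)
    (hmu : ∃ σ : Equiv.Perm (Fin n), mu = hCE.eigenvalues ∘ σ)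
    (k : Fin n) (u v : Fin n → ℝ)
    (hu : C.mulVec u = lam k • u) (hv : (C + E).mulVec v = mu k • v)
    (hu1 : ∑ i, u i ^ 2 = 1) (hv1 : ∑ i, v i ^ 2 = 1)
    (δ : ℝ) (hδ : 0 < δ)
    (hgap_prev : ∀ j : Fin n, (j : ℕ) + 1 = (k : ℕ) → δ ≤ lam j - lam k)
    (hgap_next : ∀ j : Fin n, (k : ℕ) + 1 = (j : ℕ) → δ ≤ lam k - lam j) :
    Real.sqrt (1 - (∑ i, u i * v i) ^ 2) ≤
      2 * ‖Matrix.toEuclideanCLM (𝕜 := ℝ) E‖ / δ := by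
  classical
  obtain ⟨σ, hσ⟩ := hlam
  obtain ⟨τ, hτ⟩ := hmu
  set T := Matrix.toEuclideanCLM (𝕜 := ℝ) C with hT
  set S := Matrix.toEuclideanCLM (𝕜 := ℝ) (C + E) with hS
  set F := Matrix.toEuclideanCLM (𝕜 := ℝ) E with hF
  have hSTF : S = T + F := by rw [hS, hT, hF]; exact toCLM_add C E
  set U : EuclideanSpace ℝ (Fin n) := (WithLp.equiv 2 (Fin n → ℝ)).symm u with hUdef
  set V : EuclideanSpace ℝ (Fin n) := (WithLp.equiv 2 (Fin n → ℝ)).symm v with hVdef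
  have hTU : T U = lam k • U := toCLM_mulvec_eigen C (lam k) u hu
  have hSV : S V = mu k • V := toCLM_mulvec_eigen (C + E) (mu k) v hv
  -- sorted eigenbases
  set B := hC.eigenvectorBasis.reindex σ.symm with hBdef
  set D := hCE.eigenvectorBasis.reindex τ.symm with hDdef
  have hTB : ∀ i, T (B i) = lam i • B i := by
    intro i
    have hBi : B i = hC.eigenvectorBasis (σ i) := by
      rw [hBdef, OrthonormalBasis.reindex_apply, Equiv.symm_symm]
    rw [hBi, hσ]
    exact toCLM_eigen C hC (σ i)
  have hSD : ∀ j, S (D j) = mu j • D j := by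
    intro j
    have hDj : D j = hCE.eigenvectorBasis (τ j) := by
      rw [hDdef, OrthonormalBasis.reindex_apply, Equiv.symm_symm]
    rw [hDj, hτ]
    exact toCLM_eigen (C + E) hCE (τ j)
  -- Weyl's inequality
  have hweyl : |mu k - lam k| ≤ ‖F‖ := by
    have := weyl B D T S lam mu hlam_anti hmu_anti hTB hSD k
    have hTS : T - S = -F := by rw [hSTF]; abel
    rwa [hTS, norm_neg] at this
  -- the spectral gap
  have hgap : ∀ i : Fin n, i ≠ k → δ ≤ |lam i - lam k| := by
    intro i hik
    rcases lt_or_gt_of_ne (fun h : (i : ℕ) = (k : ℕ) => hik (Fin.ext h)) with hlt | hgt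
    · have hk1 : (k : ℕ) - 1 < n := by have := k.isLt; omega
      set j : Fin n := ⟨(k : ℕ) - 1, hk1⟩ with hj
      have hjk : (j : ℕ) + 1 = (k : ℕ) := by simp [hj]; omega
      have h1 := hgap_prev j hjk
      have h2 : lam j ≤ lam i := hlam_anti (by rw [Fin.le_def]; simp [hj]; omega)
      have : δ ≤ lam i - lam k := by linarith
      exact this.trans (le_abs_self _)
    · have hk1 : (k : ℕ) + 1 < n := by have := i.isLt; omega
      set j : Fin n := ⟨(k : ℕ) + 1, hk1⟩ with hj
      have hjk : (k : ℕ) + 1 = (j : ℕ) := by simp [hj]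
      have h1 := hgap_next j hjk
      have h2 : lam i ≤ lam j := hlam_anti (by rw [Fin.le_def]; simp [hj]; omega)
      have : δ ≤ -(lam i - lam k) := by linarith
      exact this.trans (neg_le_abs _)
  -- coefficients of U vanish away from k
  have hUzero : ∀ i : Fin n, i ≠ k → B.repr U i = 0 := by
    intro i hik
    have h1 : B.repr (T U) i = lam i * B.repr U i := repr_apply_of_eigen B T lam hTB U i
    have h2 : B.repr (T U) i = lam k * B.repr U i := by
      rw [hTU, _root_.map_smul]; simp
    have hne : lam i - lam k ≠ 0 := by
      intro h
      have := hgap i hik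
      rw [h] at this; simp at this; linarith
    have : (lam i - lam k) * B.repr U i = 0 := by rw [sub_mul]; linarith [h1, h2]
    exact (mul_eq_zero.mp this).resolve_left hne
  have hUnormsq : ‖U‖ ^ 2 = 1 := by
    rw [norm_sq_eq_sum]
    simpa [hUdef, WithLp.equiv_symm_apply, PiLp.toLp_apply] using hu1
  have hVnormsq : ‖V‖ ^ 2 = 1 := by
    rw [norm_sq_eq_sum]
    simpa [hVdef, WithLp.equiv_symm_apply, PiLp.toLp_apply] using hv1
  have hUk : B.repr U k ^ 2 = 1 := by
    rw [← hUnormsq, norm_sq_eq_sum_repr B]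
    rw [Finset.sum_eq_single k (fun b _ hb => by rw [hUzero b hb]; ring)
      (fun h => absurd (Finset.mem_univ k) h)]
  -- the inner product
  have hip : (∑ i, u i * v i) = B.repr U k * B.repr V k := by
    have h1 : (∑ i, u i * v i) = (inner ℝ U V : ℝ) := by
      rw [inner_eq_sum]
      exact Finset.sum_congr rfl fun i _ => by
        rw [hUdef, hVdef, WithLp.equiv_symm_apply, PiLp.toLp_apply, PiLp.toLp_apply]
    rw [h1, inner_eq_sum_repr B]
    exact Finset.sum_eq_single k (fun b _ hb => by rw [hUzero b hb]; ring)
      (fun h => absurd (Finset.mem_univ k) h)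
  have h1ip : 1 - (∑ i, u i * v i) ^ 2 = ∑ i ∈ Finset.univ.erase k, B.repr V i ^ 2 := by
    have hVsum : ∑ i, B.repr V i ^ 2 = 1 := by
      rw [← norm_sq_eq_sum_repr B]; exact hVnormsq
    have herase : ∑ i ∈ Finset.univ.erase k, B.repr V i ^ 2 + B.repr V k ^ 2 = 1 := by
      rw [Finset.sum_erase_add _ _ (Finset.mem_univ k)]; exact hVsum
    have hipsq : (∑ i, u i * v i) ^ 2 = B.repr V k ^ 2 := by
      rw [hip, mul_pow, hUk, one_mul]
    linarith
  -- the vector y = T V - lam k • V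
  set y : EuclideanSpace ℝ (Fin n) := T V - lam k • V with hy
  have hyrepr : ∀ i, B.repr y i = (lam i - lam k) * B.repr V i := by
    intro i
    rw [hy, map_sub, _root_.map_smul]
    simp only [PiLp.sub_apply, PiLp.smul_apply, smul_eq_mul]
    rw [repr_apply_of_eigen B T lam hTB V i]; ring
  have hynormsq : ‖y‖ ^ 2 = ∑ i, ((lam i - lam k) * B.repr V i) ^ 2 := by
    rw [norm_sq_eq_sum_repr B]
    exact Finset.sum_congr rfl fun i _ => by rw [hyrepr i]
  -- lower bound on ‖y‖²
  have hlow : δ ^ 2 * (1 - (∑ i, u i * v i) ^ 2) ≤ ‖y‖ ^ 2 := by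
    rw [h1ip, hynormsq, Finset.mul_sum]
    calc ∑ i ∈ Finset.univ.erase k, δ ^ 2 * B.repr V i ^ 2
        ≤ ∑ i ∈ Finset.univ.erase k, ((lam i - lam k) * B.repr V i) ^ 2 := by
          refine Finset.sum_le_sum fun i hi => ?_
          have hik : i ≠ k := Finset.ne_of_mem_erase hi
          have h1 : δ ^ 2 ≤ (lam i - lam k) ^ 2 := by
            have := hgap i hik
            nlinarith [abs_nonneg (lam i - lam k), sq_abs (lam i - lam k)]
          rw [mul_pow]
          exact mul_le_mul_of_nonneg_right h1 (sq_nonneg _)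
      _ ≤ ∑ i, ((lam i - lam k) * B.repr V i) ^ 2 :=
          Finset.sum_le_sum_of_subset_of_nonneg (Finset.subset_univ _)
            (fun i _ _ => sq_nonneg _)
  -- upper bound on ‖y‖
  have hVnorm : ‖V‖ = 1 := by
    have := Real.sqrt_sq (norm_nonneg V)
    rw [hVnormsq] at this
    simpa using this.symm
  have hupper : ‖y‖ ≤ 2 * ‖F‖ := by
    have hTV : T V = mu k • V - F V := by
      have : S V = T V + F V := by rw [hSTF]; simp
      rw [← hSV, this]; abel
    have hyform : y = (mu k - lam k) • V - F V := by
      rw [hy, hTV, sub_smul]; abel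
    calc ‖y‖ = ‖(mu k - lam k) • V - F V‖ := by rw [hyform]
      _ ≤ ‖(mu k - lam k) • V‖ + ‖F V‖ := norm_sub_le _ _
      _ = |mu k - lam k| * ‖V‖ + ‖F V‖ := by rw [norm_smul, Real.norm_eq_abs]
      _ ≤ ‖F‖ + ‖F‖ := by
          refine add_le_add (by rw [hVnorm, mul_one]; exact hweyl) ?_
          have := F.le_opNorm V
          rwa [hVnorm, mul_one] at this
      _ = 2 * ‖F‖ := by ring
  -- conclusion
  rw [le_div_iff₀ hδ]
  have hkey : Real.sqrt (1 - (∑ i, u i * v i) ^ 2) * δ =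
      Real.sqrt (δ ^ 2 * (1 - (∑ i, u i * v i) ^ 2)) := by
    rw [Real.sqrt_mul (sq_nonneg δ), Real.sqrt_sq hδ.le]; ring
  rw [hkey]
  have h2F : (0:ℝ) ≤ 2 * ‖F‖ := by positivity
  calc Real.sqrt (δ ^ 2 * (1 - (∑ i, u i * v i) ^ 2))
      ≤ Real.sqrt ((2 * ‖F‖) ^ 2) := by
        apply Real.sqrt_le_sqrt
        calc δ ^ 2 * (1 - (∑ i, u i * v i) ^ 2) ≤ ‖y‖ ^ 2 := hlow
          _ ≤ (2 * ‖F‖) ^ 2 := by nlinarith [norm_nonneg y]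
    _ = 2 * ‖F‖ := Real.sqrt_sq h2F
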